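/- arXiv:math/0608238 — 5 statements merged into one kernel-verified Lean document; each statement's English description precedes it below -/
import Mathlib

section
/- Let G: ℕ → [0,1] be nonincreasing with lim_{j→∞} j·G(j) = 0, and fix p ∈ (0,1) and j ≥ 1. Define for i > j: a_i = ∏_{k=j+1}^{i}(1 - p·G(k))^{j}. Then ∑_{i > j} a_i = ∞. -/
open Filter

private lemma aux_sqrt_step (x : ℝ) (hx : 0 < x) :
    1 / Real.sqrt (x + 1) ≤ 1 / Real.sqrt x * (1 - 1 / (4 * (x + 1))) := by
  set s := Real.sqrt x with hs
  set t := Real.sqrt (x + 1) with ht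
  have hspos : 0 < s := Real.sqrt_pos.mpr hx
  have htpos : 0 < t := Real.sqrt_pos.mpr (by linarith)
  have hs2 : s ^ 2 = x := Real.sq_sqrt hx.le
  have ht2 : t ^ 2 = x + 1 := Real.sq_sqrt (by linarith)
  have hst : s ≤ t := Real.sqrt_le_sqrt (by linarith)
  have hr : 1 / s * (1 - 1 / (4 * (x + 1))) = (4 * t ^ 2 - 1) / (s * (4 * t ^ 2)) := by
    rw [← ht2]; field_simp
  rw [hr, div_le_div_iff₀ htpos (mul_pos hspos (by nlinarith))]
  have h2 : 2 * t * (t - s) = 1 + (t - s) ^ 2 := by linear_combination ht2 - hs2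
  nlinarith [mul_nonneg (sq_nonneg (t - s)) htpos.le]

/-- If `G : ℕ → [0,1]` is nonincreasing with `j·G(j) → 0`, `p ∈ (0,1)` and `j ≥ 1`,
then the series `∑_{i > j} ∏_{k=j+1}^{i} (1 - p·G(k))^j` diverges. -/
theorem stmt_6 (G : ℕ → ℝ) (hG0 : ∀ k, 0 ≤ G k) (hG1 : ∀ k, G k ≤ 1)
    (hmono : Antitone G) (htail : Tendsto (fun k : ℕ => (k : ℝ) * G k) atTop (nhds 0))
    (p : ℝ) (hp : 0 < p) (hp1 : p < 1) (j : ℕ) (hj : 1 ≤ j) :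
    ¬ Summable (fun i : ℕ =>
        ∏ k ∈ Finset.Icc (j + 1) (j + 1 + i), (1 - p * G k) ^ j) := by
  intro hsum
  set f : ℕ → ℝ := fun i => ∏ k ∈ Finset.Icc (j + 1) i, (1 - p * G k) ^ j with hf
  have hsum' : Summable f := by
    have h1 : Summable (fun i => f (i + (j + 1))) := by
      have : (fun i : ℕ => f (i + (j + 1))) =
          (fun i : ℕ => ∏ k ∈ Finset.Icc (j + 1) (j + 1 + i), (1 - p * G k) ^ j) := by
        funext i; simp [hf, add_comm]
      rw [this]; exact hsum
    exact (summable_nat_add_iff (j + 1)).mp h1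
  have hjR : (1 : ℝ) ≤ (j : ℝ) := by exact_mod_cast hj
  have hε : (0 : ℝ) < 1 / (4 * j * p) := by positivity
  have hev : ∀ᶠ k : ℕ in atTop, (k : ℝ) * G k < 1 / (4 * j * p) :=
    htail.eventually_lt_const hε
  obtain ⟨N0, hN0⟩ := eventually_atTop.mp hev
  set N := max N0 (j + 1) with hN
  have hNj : j + 1 ≤ N := le_max_right _ _
  have hN1 : 1 ≤ N := le_trans (by omega) hNj
  have hsmall : ∀ k : ℕ, N ≤ k → p * G k ≤ 1 / (4 * j * (k : ℝ)) := by
    intro k hk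
    have hkpos : (0 : ℝ) < (k : ℝ) := by
      have : 1 ≤ k := le_trans hN1 hk
      exact_mod_cast this
    have h := hN0 k (le_trans (le_max_left _ _) hk)
    rw [le_div_iff₀ (by positivity)]
    have h2 : (k : ℝ) * G k * (4 * j * p) ≤ 1 := by
      rw [lt_div_iff₀ (by positivity)] at h
      exact le_of_lt h
    nlinarith [hG0 k]
  have hfac : ∀ k, 0 < 1 - p * G k := by
    intro k; nlinarith [hG0 k, hG1 k]
  have hfpos : ∀ i, 0 < f i := by
    intro i
    exact Finset.prod_pos fun k _ => pow_pos (hfac k) j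
  have hNpos : (0 : ℝ) < (N : ℝ) := by exact_mod_cast hN1
  -- key lower bound
  have key : ∀ i, N ≤ i → f N * Real.sqrt N / Real.sqrt i ≤ f i := by
    intro i hi
    induction i with
    | zero => omega
    | succ i ih =>
      rcases eq_or_lt_of_le hi with heq | hlt
      · rw [← heq]
        have : Real.sqrt N ≠ 0 := by
          positivity
        field_simp
        exact le_refl _
      · have hi' : N ≤ i := by omega
        have hstep : f (i + 1) = f i * (1 - p * G (i + 1)) ^ j := by
          rw [hf]
          exact Finset.prod_Icc_succ_top (by omega) _
        have hipos : (0 : ℝ) < (i : ℝ) := by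
          have : 1 ≤ i := le_trans hN1 hi'
          exact_mod_cast this
        -- Bernoulli
        have hBern : 1 - (j : ℝ) * (p * G (i + 1)) ≤ (1 - p * G (i + 1)) ^ j := by
          have := one_add_mul_le_pow (a := -(p * G (i + 1))) (by nlinarith [hG0 (i+1), hG1 (i+1)]) j
          calc 1 - (j : ℝ) * (p * G (i + 1)) = 1 + j * (-(p * G (i + 1))) := by ring
            _ ≤ (1 + -(p * G (i + 1))) ^ j := this
            _ = (1 - p * G (i + 1)) ^ j := by ring_nf
        have hGsmall : p * G (i + 1) ≤ 1 / (4 * j * ((i : ℝ) + 1)) := by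
          have := hsmall (i + 1) (by omega)
          push_cast at this ⊢
          exact this
        have hfactor : 1 - 1 / (4 * ((i : ℝ) + 1)) ≤ (1 - p * G (i + 1)) ^ j := by
          refine le_trans ?_ hBern
          have hjpos : (0 : ℝ) < (j : ℝ) := by linarith
          have : (j : ℝ) * (p * G (i + 1)) ≤ (j : ℝ) * (1 / (4 * j * ((i : ℝ) + 1))) :=
            mul_le_mul_of_nonneg_left hGsmall (le_of_lt hjpos)
          have heq2 : (j : ℝ) * (1 / (4 * j * ((i : ℝ) + 1))) = 1 / (4 * ((i : ℝ) + 1)) := by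
            field_simp
          linarith [heq2 ▸ this]
        -- sqrt step
        push_cast
        set s := Real.sqrt i with hs
        set t := Real.sqrt ((i : ℝ) + 1) with ht
        have hspos : 0 < s := Real.sqrt_pos.mpr hipos
        have hsqrt : 1 / t ≤ (1 / s) * (1 - 1 / (4 * ((i : ℝ) + 1))) :=
          aux_sqrt_step (i : ℝ) hipos
        have hC : 0 < f N * Real.sqrt N := mul_pos (hfpos N) (Real.sqrt_pos.mpr hNpos)
        calc f N * Real.sqrt N / t = (f N * Real.sqrt N) * (1 / t) := by ring
          _ ≤ (f N * Real.sqrt N) * ((1 / s) * (1 - 1 / (4 * ((i : ℝ) + 1)))) :=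
              mul_le_mul_of_nonneg_left hsqrt (le_of_lt hC)
          _ = (f N * Real.sqrt N / s) * (1 - 1 / (4 * ((i : ℝ) + 1))) := by ring
          _ ≤ f i * (1 - p * G (i + 1)) ^ j := by
              apply mul_le_mul (ih hi') hfactor ?_ (le_of_lt (hfpos i))
              have : 1 / (4 * ((i : ℝ) + 1)) ≤ 1 / 4 := by
                apply div_le_div_of_nonneg_left <;> linarith
              linarith
          _ = f (i + 1) := hstep.symm
  -- derive contradiction
  have hC : 0 < f N * Real.sqrt N := mul_pos (hfpos N) (Real.sqrt_pos.mpr hNpos)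
  have hsum2 : Summable (fun i : ℕ => f N * Real.sqrt N / Real.sqrt (((i + N : ℕ) : ℝ))) := by
    apply Summable.of_nonneg_of_le
      (fun i => div_nonneg hC.le (Real.sqrt_nonneg _))
      (fun i => key (i + N) (by omega))
    exact (summable_nat_add_iff N).mpr hsum'
  have hsum3 : Summable (fun i : ℕ => f N * Real.sqrt N / Real.sqrt i) :=
    (summable_nat_add_iff N).mp hsum2
  have hsum4 : Summable (fun i : ℕ => 1 / Real.sqrt i) := by
    have := hsum3.div_const (f N * Real.sqrt N)
    refine this.congr fun i => ?_
    rw [div_right_comm, div_self hC.ne']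
  have : ¬ Summable (fun i : ℕ => 1 / (i : ℝ) ^ ((1:ℝ)/2)) := by
    rw [Real.summable_one_div_nat_rpow]
    norm_num
  apply this
  convert hsum4 using 2 with i
  rw [Real.sqrt_eq_rpow]
end

section
/- Let G: ℕ → [0,1] be nonincreasing with liminf_{j→∞} j·G(j) > η > 0, and fix p ∈ (0,1) and an integer j with p·j·η > 1. Define for i > j ≥ N (N large enough that k·G(k) > η for k ≥ N): b_i = ∏_{k=j+1}^{i}(1 - p·G(k))^{j}. Then ∑_{i > j} b_i < ∞. -/
open Filter

/-- If `G : ℕ → [0,1]` is nonincreasing, `liminf j·G(j) > η > 0` (so `k·G(k) > η` for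
`k ≥ N`), `p ∈ (0,1)`, `j ≥ N` and `p·j·η > 1`, then the series
`∑_{i > j} ∏_{k=j+1}^{i} (1 - p·G(k))^j` converges. -/
theorem stmt_7 (G : ℕ → ℝ) (hG0 : ∀ k, 0 ≤ G k) (hG1 : ∀ k, G k ≤ 1)
    (hmono : Antitone G) (η : ℝ) (hη : 0 < η)
    (hliminf : η < Filter.liminf (fun k : ℕ => (k : ℝ) * G k) atTop)
    (N : ℕ) (htail : ∀ k : ℕ, N ≤ k → η < (k : ℝ) * G k)
    (p : ℝ) (hp : 0 < p) (hp1 : p < 1) (j : ℕ) (hjN : N ≤ j)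
    (hpjη : 1 < p * j * η) :
    Summable (fun i : ℕ =>
        ∏ k ∈ Finset.Icc (j + 1) (j + 1 + i), (1 - p * G k) ^ j) := by
  set s : ℝ := p * j * η with hs
  have hspos : (0:ℝ) < s := lt_trans one_pos hpjη
  -- nonnegativity of factors
  have hfac_nonneg : ∀ k : ℕ, (0:ℝ) ≤ 1 - p * G k := by
    intro k
    have : p * G k ≤ 1 * 1 :=
      mul_le_mul hp1.le (hG1 k) (hG0 k) zero_le_one
    linarith
  -- key pointwise bound
  have key : ∀ i : ℕ,
      (∏ k ∈ Finset.Icc (j + 1) (j + 1 + i), (1 - p * G k) ^ j)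
        ≤ ((j:ℝ)+1) ^ s * (((j:ℝ)+2+i)) ^ (-s) := by
    intro i
    -- step 1: bound product by exponential
    have h1 : (∏ k ∈ Finset.Icc (j + 1) (j + 1 + i), (1 - p * G k) ^ j)
        ≤ ∏ k ∈ Finset.Icc (j + 1) (j + 1 + i),
            Real.exp ((j:ℝ) * (-(p * G k))) := by
      apply Finset.prod_le_prod
      · intro k _; exact pow_nonneg (hfac_nonneg k) j
      · intro k _
        have h2 : (1 - p * G k) ≤ Real.exp (-(p * G k)) := by
          have := Real.add_one_le_exp (-(p * G k))
          linarith
        calc (1 - p * G k) ^ j ≤ Real.exp (-(p * G k)) ^ j :=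
              pow_le_pow_left₀ (hfac_nonneg k) h2 j
          _ = Real.exp ((j:ℝ) * (-(p * G k))) := by
              rw [← Real.exp_nat_mul]
    have h3 : (∏ k ∈ Finset.Icc (j + 1) (j + 1 + i),
        Real.exp ((j:ℝ) * (-(p * G k))))
        = Real.exp (∑ k ∈ Finset.Icc (j + 1) (j + 1 + i), (j:ℝ) * (-(p * G k))) := by
      rw [Real.exp_sum]
    -- step 2: lower bound for sum of G
    have hGk : ∀ k ∈ Finset.Icc (j + 1) (j + 1 + i),
        η * (Real.log (k+1) - Real.log k) ≤ G k := by
      intro k hk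
      have hk1 : j + 1 ≤ k := (Finset.mem_Icc.mp hk).1
      have hkpos : (0:ℝ) < (k:ℝ) := by
        have : 1 ≤ k := le_trans (Nat.succ_le_succ (Nat.zero_le j)) hk1
        exact_mod_cast this
      have hNk : N ≤ k := le_trans (le_trans hjN (Nat.le_succ j)) hk1
      have hηk : η < (k:ℝ) * G k := htail k hNk
      have hlog : Real.log ((k:ℝ)+1) - Real.log k ≤ 1 / k := by
        rw [← Real.log_div (by positivity) (ne_of_gt hkpos)]
        have := Real.log_le_sub_one_of_pos (show (0:ℝ) < ((k:ℝ)+1)/k by positivity)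
        have h4 : ((k:ℝ)+1)/k - 1 = 1/k := by field_simp; ring
        linarith
      have : η * (Real.log ((k:ℝ)+1) - Real.log k) ≤ η * (1/k) :=
        mul_le_mul_of_nonneg_left hlog hη.le
      have h5 : η * (1/k) ≤ G k := by
        rw [mul_one_div, div_le_iff₀ hkpos]
        nlinarith
      linarith
    have htel : ∑ k ∈ Finset.Icc (j + 1) (j + 1 + i),
        (Real.log ((k:ℝ)+1) - Real.log k)
        = Real.log ((j:ℝ)+2+i) - Real.log ((j:ℝ)+1) := by
      have h0 : Finset.Icc (j+1) (j+1+i) = Finset.Ico (j+1) (j+1+i+1) := by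
        rw [Finset.Ico_add_one_right_eq_Icc]
      rw [h0, Finset.sum_Ico_eq_sum_range]
      have hsimp : j + 1 + i + 1 - (j+1) = i + 1 := by omega
      rw [hsimp]
      have h2 := Finset.sum_range_sub (fun t : ℕ => Real.log ((j:ℝ)+1+t)) (i+1)
      calc ∑ t ∈ Finset.range (i+1),
            (Real.log ((↑(j+1+t):ℝ)+1) - Real.log (↑(j+1+t) : ℝ))
          = ∑ t ∈ Finset.range (i+1),
            (Real.log ((j:ℝ)+1+(↑(t+1):ℝ)) - Real.log ((j:ℝ)+1+↑t)) := by
            apply Finset.sum_congr rfl; intro t _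
            congr 2 <;> push_cast <;> ring
        _ = Real.log ((j:ℝ)+1+(↑(i+1):ℝ)) - Real.log ((j:ℝ)+1+(0:ℕ)) := h2
        _ = Real.log ((j:ℝ)+2+i) - Real.log ((j:ℝ)+1) := by
            congr 2 <;> push_cast <;> ring
    have hsumG : η * (Real.log ((j:ℝ)+2+i) - Real.log ((j:ℝ)+1))
        ≤ ∑ k ∈ Finset.Icc (j + 1) (j + 1 + i), G k := by
      calc η * (Real.log ((j:ℝ)+2+i) - Real.log ((j:ℝ)+1))
          = ∑ k ∈ Finset.Icc (j + 1) (j + 1 + i),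
              η * (Real.log ((k:ℝ)+1) - Real.log k) := by
            rw [← Finset.mul_sum, htel]
        _ ≤ _ := Finset.sum_le_sum hGk
    -- combine
    have hexp : ∑ k ∈ Finset.Icc (j + 1) (j + 1 + i), (j:ℝ) * (-(p * G k))
        ≤ -s * (Real.log ((j:ℝ)+2+i) - Real.log ((j:ℝ)+1)) := by
      have : ∑ k ∈ Finset.Icc (j + 1) (j + 1 + i), (j:ℝ) * (-(p * G k))
          = -((j:ℝ) * p) * ∑ k ∈ Finset.Icc (j + 1) (j + 1 + i), G k := by
        rw [Finset.mul_sum]; congr 1; ext k; ring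
      rw [this]
      have hjp : (0:ℝ) ≤ (j:ℝ) * p := by positivity
      have := mul_le_mul_of_nonneg_left hsumG hjp
      rw [hs]; nlinarith
    have hfinal : Real.exp (-s * (Real.log ((j:ℝ)+2+i) - Real.log ((j:ℝ)+1)))
        = ((j:ℝ)+1) ^ s * (((j:ℝ)+2+i)) ^ (-s) := by
      rw [Real.rpow_def_of_pos (show (0:ℝ) < (j:ℝ)+1 by positivity),
          Real.rpow_def_of_pos (show (0:ℝ) < (j:ℝ)+2+i by positivity),
          ← Real.exp_add]
      ring_nf
    calc (∏ k ∈ Finset.Icc (j + 1) (j + 1 + i), (1 - p * G k) ^ j)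
        ≤ Real.exp (∑ k ∈ Finset.Icc (j + 1) (j + 1 + i), (j:ℝ) * (-(p * G k))) := by
          rw [← h3]; exact h1
      _ ≤ Real.exp (-s * (Real.log ((j:ℝ)+2+i) - Real.log ((j:ℝ)+1))) :=
          Real.exp_le_exp.mpr hexp
      _ = _ := hfinal
  -- summable majorant
  have hmaj : Summable (fun i : ℕ => ((j:ℝ)+1) ^ s * (((j:ℝ)+2+i)) ^ (-s)) := by
    apply Summable.mul_left
    have h1 : Summable (fun n : ℕ => (n:ℝ) ^ (-s)) := by
      rw [Real.summable_nat_rpow]; linarith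
    have h2 := (summable_nat_add_iff (j+2)).2 h1
    apply h2.congr
    intro i
    congr 1
    push_cast; ring
  exact Summable.of_nonneg_of_le
    (fun i => Finset.prod_nonneg (fun k _ => pow_nonneg (hfac_nonneg k) j))
    key hmaj
end

section
/- In the Poisson Boolean model on ℝ^d with intensity λ > 0 and i.i.d. cube radii ρ_i, if E(ρ₁^d) = ∞ then the covered region C equals ℝ^d almost surely (Hall's theorem, Theorem 1.1). -/
open MeasureTheory

/-- Auxiliary: divergence of the shifted moment integral. -/
lemma stmt_9_aux_div (d : ℕ) (ν : Measure ℝ) [IsProbabilityMeasure ν]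
    (hνpos : ν (Set.Iic 0) = 0)
    (hmom : ∫⁻ r, ENNReal.ofReal (r ^ d) ∂ν = ⊤) (c : ℝ) (hc : 0 < c) :
    ∫⁻ r, ENNReal.ofReal (r - c) ^ d ∂ν = ⊤ := by
  by_contra hfin
  have hae : ∀ᵐ r ∂ν, 0 < r := by
    have : {r : ℝ | ¬ 0 < r} = Set.Iic 0 := by ext r; simp
    rw [MeasureTheory.ae_iff, this]; exact hνpos
  have hbound : ∀ᵐ r ∂ν, ENNReal.ofReal (r ^ d)
      ≤ ENNReal.ofReal ((2*c) ^ d) + ENNReal.ofReal (2 ^ d) * ENNReal.ofReal (r - c) ^ d := by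
    filter_upwards [hae] with r hr
    rcases le_or_gt r (2*c) with h | h
    · refine le_trans ?_ le_self_add
      exact ENNReal.ofReal_le_ofReal (pow_le_pow_left₀ hr.le h d)
    · refine le_trans ?_ le_add_self
      have h1 : 0 ≤ r - c := by linarith
      have h2 : r ^ d ≤ 2 ^ d * (r - c) ^ d := by
        rw [← mul_pow]
        exact pow_le_pow_left₀ (by linarith) (by linarith) d
      calc ENNReal.ofReal (r ^ d) ≤ ENNReal.ofReal (2 ^ d * (r - c) ^ d) :=
            ENNReal.ofReal_le_ofReal h2
        _ = ENNReal.ofReal (2 ^ d) * ENNReal.ofReal ((r - c) ^ d) :=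
            ENNReal.ofReal_mul (by positivity)
        _ = ENNReal.ofReal (2 ^ d) * ENNReal.ofReal (r - c) ^ d := by
            rw [ENNReal.ofReal_pow h1]
  have hle := MeasureTheory.lintegral_mono_ae hbound
  rw [hmom] at hle
  have hmeas : Measurable fun r : ℝ => ENNReal.ofReal (r - c) ^ d := by
    exact ((measurable_id.sub measurable_const).ennreal_ofReal).pow_const d
  rw [MeasureTheory.lintegral_add_left measurable_const,
    MeasureTheory.lintegral_const_mul _ hmeas, MeasureTheory.lintegral_const,
    measure_univ, mul_one] at hle
  have : ENNReal.ofReal ((2*c) ^ d) + ENNReal.ofReal (2 ^ d) * ∫⁻ r, ENNReal.ofReal (r - c) ^ d ∂ν ≠ ⊤ := by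
    apply ENNReal.add_ne_top.2
    constructor
    · exact ENNReal.ofReal_ne_top
    · exact ENNReal.mul_ne_top ENNReal.ofReal_ne_top hfin
  exact this (top_le_iff.mp hle)

/-- Hall's theorem (Theorem 1.1, coverage direction): in the Poisson Boolean model on
`ℝ^d` with intensity `λ > 0` and i.i.d. cubes `[0,ρ]^d` whose radius law `ν` satisfies
`E(ρ₁^d) = ∞`, the covered region `C = ⋃ᵢ (xᵢ + [0,ρᵢ]^d)` equals `ℝ^d` almost surely.
The marked Poisson process is specified through its void probabilities. -/
theorem stmt_9 {Ω : Type*} [MeasurableSpace Ω] (μ : Measure Ω) [IsProbabilityMeasure μ]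
    (d : ℕ) (hd : 1 ≤ d) (lam : ℝ) (hlam : 0 < lam)
    (x : ℕ → Ω → (Fin d → ℝ)) (R : ℕ → Ω → ℝ)
    (hxmeas : ∀ i, Measurable (x i)) (hRmeas : ∀ i, Measurable (R i))
    (ν : Measure ℝ) [IsProbabilityMeasure ν] (hνpos : ν (Set.Iic 0) = 0)
    (hvoid : ∀ A : Set ((Fin d → ℝ) × ℝ), MeasurableSet A →
      ((volume : Measure (Fin d → ℝ)).prod ν) A < ⊤ →
      μ {ω | ∀ i, (x i ω, R i ω) ∉ A}
        = ENNReal.ofReal (Real.exp (-(lam * (((volume : Measure (Fin d → ℝ)).prod ν) A).toReal))))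
    (hmom : ∫⁻ r, ENNReal.ofReal (r ^ d) ∂ν = ⊤) :
    μ {ω | (⋃ i, {y : Fin d → ℝ | ∀ k, x i ω k ≤ y k ∧ y k ≤ x i ω k + R i ω})
        = Set.univ} = 1 := by
  classical
  set ε : ℕ → ℝ := fun m => 1 / (m + 1) with hεdef
  have hεpos : ∀ m, 0 < ε m := fun m => by positivity
  set A : (Fin d → ℚ) → ℕ → ℕ → Set ((Fin d → ℝ) × ℝ) := fun q m n =>
    {pr | (∀ k, pr.1 k ≤ (q k : ℝ) - ε m ∧ (q k : ℝ) + ε m ≤ pr.1 k + pr.2) ∧ pr.2 ≤ n}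
    with hAdef
  have hAmeas : ∀ q m n, MeasurableSet (A q m n) := by
    intro q m n
    have heq : A q m n = (⋂ k : Fin d, ({pr : (Fin d → ℝ) × ℝ | pr.1 k ≤ (q k : ℝ) - ε m}
        ∩ {pr : (Fin d → ℝ) × ℝ | (q k : ℝ) + ε m ≤ pr.1 k + pr.2}))
        ∩ {pr : (Fin d → ℝ) × ℝ | pr.2 ≤ (n : ℝ)} := by
      ext pr
      simp only [hAdef, Set.mem_setOf_eq, Set.mem_inter_iff, Set.mem_iInter]
      try tauto
    rw [heq]
    refine MeasurableSet.inter (MeasurableSet.iInter fun k => MeasurableSet.inter ?_ ?_) ?_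
    · exact measurableSet_le (by fun_prop) (by fun_prop)
    · exact measurableSet_le (by fun_prop) (by fun_prop)
    · exact measurableSet_le (by fun_prop) (by fun_prop)
  -- the measure of each A q m n
  have hAval : ∀ q m n, ((volume : Measure (Fin d → ℝ)).prod ν) (A q m n)
      = ∫⁻ r, Set.indicator (Set.Iic (n : ℝ))
          (fun r => ENNReal.ofReal (r - 2 * ε m) ^ d) r ∂ν := by
    intro q m n
    rw [MeasureTheory.Measure.prod_apply_symm (hAmeas q m n)]
    congr 1
    ext r
    by_cases hr : r ≤ (n : ℝ)
    · rw [Set.indicator_of_mem (Set.mem_Iic.2 hr)]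
      have hset : (fun p : Fin d → ℝ => (p, r)) ⁻¹' A q m n
          = Set.Icc (fun k => (q k : ℝ) + ε m - r) (fun k => (q k : ℝ) - ε m) := by
        ext p
        simp only [hAdef, Set.mem_preimage, Set.mem_setOf_eq, Set.mem_Icc, Pi.le_def]
        constructor
        · rintro ⟨h1, _⟩
          exact ⟨fun k => by linarith [(h1 k).2], fun k => (h1 k).1⟩
        · rintro ⟨h1, h2⟩
          exact ⟨fun k => ⟨h2 k, by linarith [h1 k]⟩, hr⟩
      rw [hset, Real.volume_Icc_pi]
      have : ∀ k : Fin d, ((q k : ℝ) - ε m) - ((q k : ℝ) + ε m - r) = r - 2 * ε m := by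
        intro k; ring
      simp only [this]
      rw [Finset.prod_const, Finset.card_univ, Fintype.card_fin]
    · rw [Set.indicator_of_notMem (by simpa using hr)]
      have hset : (fun p : Fin d → ℝ => (p, r)) ⁻¹' A q m n = ∅ := by
        ext p
        simp only [hAdef, Set.mem_preimage, Set.mem_setOf_eq, Set.mem_empty_iff_false,
          iff_false, not_and]
        intro _; exact hr
      rw [hset, measure_empty]
  -- finiteness
  have hfin : ∀ q m n, ((volume : Measure (Fin d → ℝ)).prod ν) (A q m n) < ⊤ := by
    intro q m n
    rw [hAval q m n]
    have hb : ∀ r : ℝ, Set.indicator (Set.Iic (n : ℝ))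
        (fun r => ENNReal.ofReal (r - 2 * ε m) ^ d) r ≤ ENNReal.ofReal n ^ d := by
      intro r
      by_cases hr : r ∈ Set.Iic (n : ℝ)
      · rw [Set.indicator_of_mem hr]
        exact pow_le_pow_left' (ENNReal.ofReal_le_ofReal
          (by simp only [Set.mem_Iic] at hr; nlinarith [hεpos m])) d
      · rw [Set.indicator_of_notMem hr]; exact zero_le
    calc ∫⁻ r, Set.indicator (Set.Iic (n : ℝ))
          (fun r => ENNReal.ofReal (r - 2 * ε m) ^ d) r ∂ν
        ≤ ∫⁻ _, ENNReal.ofReal n ^ d ∂ν := MeasureTheory.lintegral_mono hb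
      _ = ENNReal.ofReal n ^ d := by
          rw [MeasureTheory.lintegral_const, measure_univ, mul_one]
      _ < ⊤ := ENNReal.pow_lt_top ENNReal.ofReal_lt_top
  -- divergence of sup over n
  have hdiv : ∀ q m, (⨆ n, ((volume : Measure (Fin d → ℝ)).prod ν) (A q m n)) = ⊤ := by
    intro q m
    have hmeasf : ∀ n : ℕ, Measurable (Set.indicator (Set.Iic (n : ℝ))
        (fun r => ENNReal.ofReal (r - 2 * ε m) ^ d)) := by
      intro n
      exact Measurable.indicator
        (((measurable_id.sub measurable_const).ennreal_ofReal).pow_const d)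
        measurableSet_Iic
    have hmono : Monotone (fun n : ℕ => Set.indicator (Set.Iic (n : ℝ))
        (fun r => ENNReal.ofReal (r - 2 * ε m) ^ d)) := by
      intro a b hab
      apply Set.indicator_le_indicator_of_subset
      · exact Set.Iic_subset_Iic.2 (Nat.cast_le.2 hab)
      · intro r; exact zero_le
    have hsup : ∀ r : ℝ, (⨆ n : ℕ, Set.indicator (Set.Iic (n : ℝ))
        (fun r => ENNReal.ofReal (r - 2 * ε m) ^ d) r)
        = ENNReal.ofReal (r - 2 * ε m) ^ d := by
      intro r
      apply le_antisymm
      · exact iSup_le fun n => Set.indicator_le_self _ _ r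
      · obtain ⟨n, hn⟩ := exists_nat_ge r
        refine le_trans ?_ (le_iSup _ n)
        rw [Set.indicator_of_mem (Set.mem_Iic.2 hn)]
    simp only [hAval q m]
    rw [← MeasureTheory.lintegral_iSup hmeasf hmono]
    calc ∫⁻ r, (⨆ n : ℕ, Set.indicator (Set.Iic (n : ℝ))
          (fun r => ENNReal.ofReal (r - 2 * ε m) ^ d) r) ∂ν
        = ∫⁻ r, ENNReal.ofReal (r - 2 * ε m) ^ d ∂ν := by
          apply MeasureTheory.lintegral_congr; exact hsup
      _ = ⊤ := stmt_9_aux_div d ν hνpos hmom (2 * ε m) (by positivity)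
  -- each bad event is null
  have hnull : ∀ q m, μ {ω | ∀ i, (x i ω, R i ω) ∉ ⋃ n, A q m n} = 0 := by
    intro q m
    have hle : ∀ M : ℝ, 0 ≤ M →
        μ {ω | ∀ i, (x i ω, R i ω) ∉ ⋃ n, A q m n}
          ≤ ENNReal.ofReal (Real.exp (-(lam * M))) := by
      intro M hM
      obtain ⟨n, hn⟩ : ∃ n, ENNReal.ofReal M
          < ((volume : Measure (Fin d → ℝ)).prod ν) (A q m n) := by
        rw [← lt_iSup_iff, hdiv q m]; exact ENNReal.ofReal_lt_top
      have hMt : M ≤ (((volume : Measure (Fin d → ℝ)).prod ν) (A q m n)).toReal := by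
        have := ENNReal.toReal_mono (hfin q m n).ne hn.le
        rwa [ENNReal.toReal_ofReal hM] at this
      calc μ {ω | ∀ i, (x i ω, R i ω) ∉ ⋃ n, A q m n}
          ≤ μ {ω | ∀ i, (x i ω, R i ω) ∉ A q m n} := by
            apply measure_mono
            intro ω hω i hi
            exact hω i (Set.mem_iUnion.2 ⟨n, hi⟩)
        _ = ENNReal.ofReal (Real.exp
            (-(lam * (((volume : Measure (Fin d → ℝ)).prod ν) (A q m n)).toReal))) :=
            hvoid (A q m n) (hAmeas q m n) (hfin q m n)
        _ ≤ ENNReal.ofReal (Real.exp (-(lam * M))) := by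
            apply ENNReal.ofReal_le_ofReal
            apply Real.exp_le_exp.2
            nlinarith
    have htend : Filter.Tendsto (fun M : ℝ => ENNReal.ofReal (Real.exp (-(lam * M))))
        Filter.atTop (nhds 0) := by
      have h1 : Filter.Tendsto (fun M : ℝ => -(lam * M)) Filter.atTop Filter.atBot := by
        apply Filter.tendsto_neg_atBot_iff.2
        exact Filter.Tendsto.const_mul_atTop hlam Filter.tendsto_id
      have h2 : Filter.Tendsto (fun M : ℝ => Real.exp (-(lam * M)))
          Filter.atTop (nhds 0) := Real.tendsto_exp_atBot.comp h1
      have := (ENNReal.continuous_ofReal.tendsto 0).comp h2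
      simpa [Function.comp_def] using this
    have hle0 : μ {ω | ∀ i, (x i ω, R i ω) ∉ ⋃ n, A q m n} ≤ 0 := by
      apply ge_of_tendsto htend
      filter_upwards [Filter.eventually_ge_atTop (0 : ℝ)] with M hM
      exact hle M hM
    exact le_antisymm hle0 zero_le
  -- the global null set
  set N : Set Ω := ⋃ (q : Fin d → ℚ) (m : ℕ), {ω | ∀ i, (x i ω, R i ω) ∉ ⋃ n, A q m n}
    with hNdef
  have hNnull : μ N = 0 :=
    measure_iUnion_null fun q => measure_iUnion_null fun m => hnull q m
  have hsub : Nᶜ ⊆ {ω | (⋃ i, {y : Fin d → ℝ | ∀ k, x i ω k ≤ y k ∧ y k ≤ x i ω k + R i ω})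
      = Set.univ} := by
    intro ω hω
    simp only [hNdef, Set.mem_compl_iff, Set.mem_iUnion, not_exists, Set.mem_setOf_eq,
      not_forall, not_not] at hω
    have hω' : ∀ (q : Fin d → ℚ) (m : ℕ), ∃ i, (x i ω, R i ω) ∈ ⋃ n, A q m n := by
      intro q m
      obtain ⟨i, n, h⟩ := hω q m
      exact ⟨i, Set.mem_iUnion.2 ⟨n, h⟩⟩
    simp only [Set.mem_setOf_eq]
    rw [Set.eq_univ_iff_forall]
    intro z
    -- choose a rational point near z
    have hq : ∀ k : Fin d, ∃ q : ℚ, z k < (q : ℝ) ∧ (q : ℝ) < z k + ε 0 := by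
      intro k
      exact exists_rat_btwn (by linarith [hεpos 0])
    choose q hq1 hq2 using hq
    obtain ⟨i, hi⟩ := hω' q 0
    obtain ⟨n, hn⟩ := Set.mem_iUnion.1 hi
    obtain ⟨h1, _⟩ := hn
    rw [Set.mem_iUnion]
    refine ⟨i, fun k => ?_⟩
    obtain ⟨ha, hb⟩ := h1 k
    constructor
    · linarith [hq2 k]
    · linarith [hq1 k, hεpos 0]
  apply le_antisymm
  · calc μ _ ≤ μ Set.univ := measure_mono (Set.subset_univ _)
      _ = 1 := measure_univ
  · calc (1 : ENNReal) = μ Set.univ := measure_univ.symm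
      _ = μ (N ∪ Nᶜ) := by rw [Set.union_compl_self]
      _ ≤ μ N + μ Nᶜ := measure_union_le _ _
      _ = μ Nᶜ := by rw [hNnull, zero_add]
      _ ≤ _ := measure_mono hsub
end

section
/- Let X₁, X₂, ... be a {0,1}-valued Markov chain with transition probabilities p_{ij}, 0 < p00, p10 < 1, and let ρ₁, ρ₂, ... be i.i.d. positive-integer-valued random variables with distribution function F, independent of the chain. Let C = ∪_{i: X_i = 1}(i + [0,ρ_i]) and A_k = {k ∉ C}. Then setting P₀(A_k) = P(A_k | X₁ = 0) and P₁(A_k) = P(A_k | X₁ = 1), the recursions P₀(A_{k+1}) = p00·P₀(A_k) + p01·P₁(A_k) and P₁(A_{k+1}) = F(k-1)·[p10·P₀(A_k) + p11·P₁(A_k)] hold for all k ≥ 1. -/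
open MeasureTheory ProbabilityTheory

private def mcStr {n : ℕ} (b : Bool) (w : Fin n → Bool) : ℕ → Bool :=
  fun i => if i = 1 then b else if h : i - 2 < n then w ⟨i - 2, h⟩ else false

private lemma mcStr_one {n : ℕ} (b : Bool) (w : Fin n → Bool) : mcStr b w 1 = b := rfl

private lemma mcStr_mid {n : ℕ} (b : Bool) (w : Fin n → Bool) (i : ℕ) (hi : ¬ i = 1)
    (h : i - 2 < n) : mcStr b w i = w ⟨i - 2, h⟩ := by
  simp only [mcStr, if_neg hi, dif_pos h]

private lemma mcStr_two {n : ℕ} (b : Bool) (w : Fin n → Bool) (j : Fin n) :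
    mcStr b w (2 + (j : ℕ)) = w j := by
  have h1 : ¬ (2 + (j : ℕ) = 1) := by omega
  have h2 : 2 + (j : ℕ) - 2 < n := by have := j.isLt; omega
  rw [mcStr_mid b w _ h1 h2]
  congr 1
  exact Fin.ext (show 2 + (j : ℕ) - 2 = (j : ℕ) by omega)

private lemma mcStr_shift {n : ℕ} (a b : Bool) (w : Fin n → Bool) (i : ℕ) (h1 : 1 ≤ i)
    (h2 : i ≤ n + 1) : mcStr a (Fin.cons b w) (i + 1) = mcStr b w i := by
  rcases Nat.lt_or_ge i 2 with hi | hi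
  · have hi1 : i = 1 := by omega
    subst hi1
    have h0 : 1 + 1 - 2 < n + 1 := by omega
    rw [mcStr_mid a (Fin.cons b w) (1 + 1) (by omega) h0, mcStr_one]
    have : (⟨1 + 1 - 2, h0⟩ : Fin (n + 1)) = 0 := rfl
    rw [this, Fin.cons_zero]
  · have hlt : i + 1 - 2 < n + 1 := by omega
    have hlt' : i - 2 < n := by omega
    rw [mcStr_mid a (Fin.cons b w) (i + 1) (by omega) hlt, mcStr_mid b w i (by omega) hlt']
    have : (⟨i + 1 - 2, hlt⟩ : Fin (n + 1)) = Fin.succ ⟨i - 2, hlt'⟩ := Fin.ext (show i + 1 - 2 = (⟨i - 2, hlt'⟩ : Fin n).succ.val by simp [Fin.val_succ]; omega)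
    rw [this, Fin.cons_succ]

private lemma prod_Icc_shift {M : Type*} [CommMonoid M] (m : ℕ) (f : ℕ → M) :
    ∏ j ∈ Finset.Icc 1 (m + 1), f j = f 1 * ∏ j ∈ Finset.Icc 1 m, f (j + 1) := by
  have h1 : Finset.Icc 1 (m + 1) = insert 1 (Finset.Icc 2 (m + 1)) := by
    ext x; simp only [Finset.mem_Icc, Finset.mem_insert]; omega
  have h2 : Finset.Icc 2 (m + 1) = (Finset.Icc 1 m).map (addRightEmbedding 1) := by
    rw [Finset.map_add_right_Icc]
  rw [h1, Finset.prod_insert (by simp [Finset.mem_Icc]), h2, Finset.prod_map]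
  rfl



/-- Recurrence relations for the uncovered-site probabilities in the one-dimensional
Markov coverage model: `X₁, X₂, …` is a `{0,1}`-valued homogeneous Markov chain with
transition probabilities `p_{ab}`, `ρ₁, ρ₂, …` are i.i.d. positive-integer radii with
distribution function `F`, independent of the chain, and `A_k` is the event that `k` is
not covered by `C = ⋃_{i : Xᵢ = 1} [i, i + ρᵢ]`. With `P_a(A_k) = P(A_k ∣ X₁ = a)`,
`P₀(A_{k+1}) = p₀₀·P₀(A_k) + p₀₁·P₁(A_k)` and
`P₁(A_{k+1}) = F(k-1)·(p₁₀·P₀(A_k) + p₁₁·P₁(A_k))` for all `k ≥ 1`. -/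
theorem stmt_11 {Ω : Type*} [MeasurableSpace Ω] (μ : Measure Ω) [IsProbabilityMeasure μ]
    (X : ℕ → Ω → Bool) (ρ : ℕ → Ω → ℕ)
    (hXmeas : ∀ i, Measurable (X i)) (hρmeas : ∀ i, Measurable (ρ i))
    (p00 p01 p10 p11 : ℝ) (h00 : 0 < p00) (h001 : p00 < 1) (h10 : 0 < p10) (h101 : p10 < 1)
    (hrow0 : p00 + p01 = 1) (hrow1 : p10 + p11 = 1)
    (ptrans : Bool → Bool → ℝ)
    (hptrans : ptrans false false = p00 ∧ ptrans false true = p01 ∧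
      ptrans true false = p10 ∧ ptrans true true = p11)
    -- homogeneous Markov property of the chain `X₁, X₂, …` via finite-dimensional laws
    (hMarkov : ∀ (n : ℕ), 1 ≤ n → ∀ b : ℕ → Bool,
      μ {ω | ∀ i, 1 ≤ i → i ≤ n + 1 → X i ω = b i}
        = μ {ω | ∀ i, 1 ≤ i → i ≤ n → X i ω = b i} * ENNReal.ofReal (ptrans (b n) (b (n + 1))))
    -- the radii are i.i.d. with distribution function `F`, take positive integer values,
    -- and are independent of the chain
    (F : ℕ → ℝ) (hρiid : iIndepFun ρ μ)
    (hρdist : ∀ i k, μ {ω | ρ i ω ≤ k} = ENNReal.ofReal (F k))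
    (hρpos : ∀ i ω, 1 ≤ ρ i ω)
    (hXρindep : IndepFun (fun ω i => X i ω : Ω → ℕ → Bool) (fun ω i => ρ i ω : Ω → ℕ → ℕ) μ)
    (hpos0 : μ {ω | X 1 ω = false} ≠ 0) (hpos1 : μ {ω | X 1 ω = true} ≠ 0)
    (A : ℕ → Set Ω)
    (hA : ∀ k, A k = {ω | ¬ ∃ i : ℕ, 1 ≤ i ∧ X i ω = true ∧ i ≤ k ∧ k ≤ i + ρ i ω}) :
    ∀ k : ℕ, 1 ≤ k →
      (μ[|{ω | X 1 ω = false}]) (A (k + 1))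
          = ENNReal.ofReal p00 * (μ[|{ω | X 1 ω = false}]) (A k)
            + ENNReal.ofReal p01 * (μ[|{ω | X 1 ω = true}]) (A k)
      ∧ (μ[|{ω | X 1 ω = true}]) (A (k + 1))
          = ENNReal.ofReal (F (k - 1)) *
              (ENNReal.ofReal p10 * (μ[|{ω | X 1 ω = false}]) (A k)
                + ENNReal.ofReal p11 * (μ[|{ω | X 1 ω = true}]) (A k)) := by
  intro k hk
  obtain ⟨n, rfl⟩ : ∃ n, k = n + 1 := ⟨k - 1, by omega⟩
  -- measurability of events
  have hEmeas : ∀ (m : ℕ) (v : ℕ → Bool),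
      MeasurableSet {ω | ∀ i, 1 ≤ i → i ≤ m → X i ω = v i} := by
    intro m v
    have h : {ω | ∀ i, 1 ≤ i → i ≤ m → X i ω = v i}
        = ⋂ i ∈ Set.Icc 1 m, X i ⁻¹' {v i} := by
      ext ω
      simp only [Set.mem_setOf_eq, Set.mem_iInter, Set.mem_preimage, Set.mem_singleton_iff,
        Set.mem_Icc, and_imp]
    rw [h]
    exact MeasurableSet.biInter (Set.to_countable _)
      fun i _ => hXmeas i (measurableSet_singleton _)
  have hAmeas : ∀ m, MeasurableSet (A m) := by
    intro m
    rw [hA]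
    have h : {ω | ¬ ∃ i : ℕ, 1 ≤ i ∧ X i ω = true ∧ i ≤ m ∧ m ≤ i + ρ i ω}
        = (⋃ i, ((X i ⁻¹' {true}) ∩ (ρ i ⁻¹' {x | 1 ≤ i ∧ i ≤ m ∧ m ≤ i + x})))ᶜ := by
      ext ω
      simp only [Set.mem_compl_iff, Set.mem_iUnion, Set.mem_inter_iff, Set.mem_preimage,
        Set.mem_singleton_iff, Set.mem_setOf_eq]
      exact not_iff_not.mpr
        ⟨fun ⟨i, h1, h2, h3, h4⟩ => ⟨i, h2, h1, h3, h4⟩,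
         fun ⟨i, h2, h1, h3, h4⟩ => ⟨i, h1, h2, h3, h4⟩⟩
    rw [h]
    exact (MeasurableSet.iUnion fun i =>
      (hXmeas i (measurableSet_singleton true)).inter
        (hρmeas i (MeasurableSpace.measurableSet_top))).compl
  -- chain finite-dimensional laws
  have chain : ∀ m, 1 ≤ m → ∀ v : ℕ → Bool,
      μ {ω | ∀ i, 1 ≤ i → i ≤ m → X i ω = v i}
        = μ {ω | X 1 ω = v 1}
            * ∏ j ∈ Finset.Icc 1 (m - 1), ENNReal.ofReal (ptrans (v j) (v (j + 1))) := by
    intro m hm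
    induction m, hm using Nat.le_induction with
    | base =>
      intro v
      have h : {ω | ∀ i, 1 ≤ i → i ≤ 1 → X i ω = v i} = {ω | X 1 ω = v 1} := by
        ext ω
        simp only [Set.mem_setOf_eq]
        exact ⟨fun h => h 1 le_rfl le_rfl,
          fun h i h1 h2 => by rw [show i = 1 by omega]; exact h⟩
      rw [h, show (1 : ℕ) - 1 = 0 from rfl, Finset.Icc_eq_empty (by omega),
        Finset.prod_empty, mul_one]
    | succ m hm ih =>
      intro v
      rw [hMarkov m hm v, ih v]
      obtain ⟨m', rfl⟩ : ∃ m', m = m' + 1 := ⟨m - 1, by omega⟩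
      rw [show m' + 1 + 1 - 1 = m' + 1 from rfl, show m' + 1 - 1 = m' from rfl,
        Finset.prod_Icc_succ_top (by omega : 1 ≤ m' + 1), mul_assoc]
  -- product law for the radii
  have rho_prod : ∀ (S : Finset ℕ) (t : ℕ → ℕ),
      μ (⋂ i ∈ S, {ω | ρ i ω ≤ t i}) = ∏ i ∈ S, ENNReal.ofReal (F (t i)) := by
    intro S t
    have h := (iIndepFun_iff_measure_inter_preimage_eq_mul.mp hρiid) S
      (sets := fun i => Set.Iic (t i)) (fun i _ => measurableSet_Iic)
    have e : ∀ i : ℕ, ρ i ⁻¹' Set.Iic (t i) = {ω | ρ i ω ≤ t i} := fun i => rfl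
    simp only [e, hρdist] at h
    exact h
  -- independence of the chain part and radii part
  have split : ∀ (m : ℕ) (v : ℕ → Bool) (S : Finset ℕ) (t : ℕ → ℕ),
      μ ({ω | ∀ i, 1 ≤ i → i ≤ m → X i ω = v i} ∩ ⋂ i ∈ S, {ω | ρ i ω ≤ t i})
        = μ {ω | ∀ i, 1 ≤ i → i ≤ m → X i ω = v i} * μ (⋂ i ∈ S, {ω | ρ i ω ≤ t i}) := by
    intro m v S t
    have hB : MeasurableSet {g : ℕ → Bool | ∀ i, 1 ≤ i → i ≤ m → g i = v i} := by
      have h : {g : ℕ → Bool | ∀ i, 1 ≤ i → i ≤ m → g i = v i}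
          = ⋂ i ∈ Set.Icc 1 m, (fun g : ℕ → Bool => g i) ⁻¹' {v i} := by
        ext g
        simp only [Set.mem_setOf_eq, Set.mem_iInter, Set.mem_preimage, Set.mem_singleton_iff,
          Set.mem_Icc, and_imp]
      rw [h]
      exact MeasurableSet.biInter (Set.to_countable _)
        fun i _ => (measurable_pi_apply i) (measurableSet_singleton _)
    have hRm : MeasurableSet {g : ℕ → ℕ | ∀ i ∈ S, g i ≤ t i} := by
      have h : {g : ℕ → ℕ | ∀ i ∈ S, g i ≤ t i}
          = ⋂ i ∈ (S : Set ℕ), (fun g : ℕ → ℕ => g i) ⁻¹' Set.Iic (t i) := by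
        ext g
        simp only [Set.mem_setOf_eq, Set.mem_iInter, Set.mem_preimage, Set.mem_Iic,
          Finset.mem_coe]
      rw [h]
      exact MeasurableSet.biInter (Set.to_countable _)
        fun i _ => (measurable_pi_apply i) measurableSet_Iic
    have h := hXρindep.measure_inter_preimage_eq_mul _ _ hB hRm
    have e1 : (fun ω i => X i ω) ⁻¹' {g : ℕ → Bool | ∀ i, 1 ≤ i → i ≤ m → g i = v i}
        = {ω | ∀ i, 1 ≤ i → i ≤ m → X i ω = v i} := rfl
    have e2 : (fun ω i => ρ i ω) ⁻¹' {g : ℕ → ℕ | ∀ i ∈ S, g i ≤ t i}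
        = ⋂ i ∈ S, {ω | ρ i ω ≤ t i} := by
      ext ω
      simp only [Set.mem_preimage, Set.mem_setOf_eq, Set.mem_iInter]
    rw [e1, e2] at h
    exact h
  -- explicit formula for one string
  have termT : ∀ m, 1 ≤ m → ∀ v : ℕ → Bool,
      μ (A m ∩ {ω | ∀ i, 1 ≤ i → i ≤ m → X i ω = v i})
        = μ {ω | X 1 ω = v 1}
            * (∏ j ∈ Finset.Icc 1 (m - 1), ENNReal.ofReal (ptrans (v j) (v (j + 1))))
            * ∏ i ∈ Finset.Icc 1 m,
                (if v i = true then ENNReal.ofReal (F (m - 1 - i)) else 1) := by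
    intro m hm v
    have hset : A m ∩ {ω | ∀ i, 1 ≤ i → i ≤ m → X i ω = v i}
        = {ω | ∀ i, 1 ≤ i → i ≤ m → X i ω = v i}
          ∩ ⋂ i ∈ (Finset.Icc 1 m).filter (fun i => v i = true), {ω | ρ i ω ≤ m - 1 - i} := by
      ext ω
      rw [hA]
      simp only [Set.mem_inter_iff, Set.mem_setOf_eq, Set.mem_iInter, Finset.mem_filter,
        Finset.mem_Icc]
      constructor
      · rintro ⟨hnot, hE⟩
        refine ⟨hE, ?_⟩
        rintro i ⟨⟨ha1, ha2⟩, hv⟩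
        have hX : X i ω = true := by rw [hE i ha1 ha2]; exact hv
        have h1 : ¬ (m ≤ i + ρ i ω) := fun hle => hnot ⟨i, ha1, hX, ha2, hle⟩
        have h2 := hρpos i ω
        omega
      · rintro ⟨hE, hρ'⟩
        refine ⟨?_, hE⟩
        rintro ⟨i, ha1, hX, ha2, hle⟩
        have hv : v i = true := by rw [← hE i ha1 ha2]; exact hX
        have h3 := hρ' i ⟨⟨ha1, ha2⟩, hv⟩
        have h4 := hρpos i ω
        omega
    rw [hset, split, rho_prod, chain m hm v, ← Finset.prod_filter]
  -- partition over the values at positions 2, …, N+1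
  have part : ∀ (B : Set Ω), MeasurableSet B → ∀ (N : ℕ),
      μ B = ∑ w : Fin N → Bool, μ (B ∩ {ω | ∀ j : Fin N, X (2 + (j : ℕ)) ω = w j}) := by
    intro B hB N
    have hPmeas : ∀ w : Fin N → Bool,
        MeasurableSet {ω | ∀ j : Fin N, X (2 + (j : ℕ)) ω = w j} := by
      intro w
      have h : {ω | ∀ j : Fin N, X (2 + (j : ℕ)) ω = w j}
          = ⋂ j : Fin N, X (2 + (j : ℕ)) ⁻¹' {w j} := by
        ext ω
        simp only [Set.mem_setOf_eq, Set.mem_iInter, Set.mem_preimage, Set.mem_singleton_iff]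
      rw [h]
      exact MeasurableSet.iInter fun j => hXmeas _ (measurableSet_singleton _)
    have hcover : B = ⋃ w : Fin N → Bool, B ∩ {ω | ∀ j : Fin N, X (2 + (j : ℕ)) ω = w j} := by
      ext ω
      simp only [Set.mem_iUnion, Set.mem_inter_iff, Set.mem_setOf_eq]
      exact ⟨fun h => ⟨fun j => X (2 + (j : ℕ)) ω, h, fun j => rfl⟩, fun ⟨w, h, _⟩ => h⟩
    have hdisj : Pairwise (Function.onFun Disjoint
        (fun w : Fin N → Bool => B ∩ {ω | ∀ j : Fin N, X (2 + (j : ℕ)) ω = w j})) := by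
      intro w w' hne
      refine Set.disjoint_left.mpr ?_
      rintro ω ⟨_, h1⟩ ⟨_, h2⟩
      exact hne (funext fun j => (h1 j).symm.trans (h2 j))
    conv_lhs => rw [hcover]
    rw [measure_iUnion hdisj fun w => hB.inter (hPmeas w), tsum_fintype]
  -- sum over strings of length n+1 as double sum
  have hsum : ∀ f : (Fin (n + 1) → Bool) → ENNReal,
      ∑ v : Fin (n + 1) → Bool, f v = ∑ b : Bool, ∑ w : Fin n → Bool, f (Fin.cons b w) := by
    intro f
    rw [← Equiv.sum_comp (Fin.consEquiv fun _ => Bool) f, Fintype.sum_prod_type]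
    rfl
  -- block identification
  have hblock : ∀ (N : ℕ) (b : Bool) (w : Fin N → Bool),
      ({ω | X 1 ω = b} ∩ {ω | ∀ j : Fin N, X (2 + (j : ℕ)) ω = w j})
        = {ω | ∀ i, 1 ≤ i → i ≤ N + 1 → X i ω = mcStr b w i} := by
    intro N b w
    ext ω
    simp only [Set.mem_inter_iff, Set.mem_setOf_eq]
    constructor
    · rintro ⟨h1, hw⟩ i hi1 hi2
      by_cases hi : i = 1
      · subst hi; rw [mcStr_one]; exact h1
      · have h2i : i - 2 < N := by omega
        have h3 := hw ⟨i - 2, h2i⟩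
        have hrw : 2 + ((⟨i - 2, h2i⟩ : Fin N) : ℕ) = i := by
          show 2 + (i - 2) = i; omega
        rw [hrw] at h3
        rw [h3, mcStr_mid b w i hi h2i]
    · intro h
      refine ⟨?_, ?_⟩
      · have h1 := h 1 le_rfl (by omega)
        rwa [mcStr_one] at h1
      · intro j
        have h1 := h (2 + (j : ℕ)) (by omega) (by have := j.isLt; omega)
        rwa [mcStr_two] at h1
  have hposb : ∀ b : Bool, μ {ω | X 1 ω = b} ≠ 0 := by
    intro b; cases b
    · exact hpos0
    · exact hpos1
  -- second partition
  have hR : ∀ b : Bool, μ (A (n + 1) ∩ {ω | X 1 ω = b})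
      = ∑ w : Fin n → Bool,
          μ (A (n + 1) ∩ ({ω | X 1 ω = b} ∩ {ω | ∀ j : Fin n, X (2 + (j : ℕ)) ω = w j})) := by
    intro b
    rw [part (A (n + 1) ∩ {ω | X 1 ω = b}) ((hAmeas _).inter (hXmeas 1 (measurableSet_singleton b))) n]
    exact Finset.sum_congr rfl fun w _ => by rw [Set.inter_assoc]
  -- term formula at level n+1
  have h2 : ∀ (b : Bool) (w : Fin n → Bool),
      μ (A (n + 1) ∩ ({ω | X 1 ω = b} ∩ {ω | ∀ j : Fin n, X (2 + (j : ℕ)) ω = w j}))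
        = μ {ω | X 1 ω = b}
            * (∏ j ∈ Finset.Icc 1 n, ENNReal.ofReal (ptrans (mcStr b w j) (mcStr b w (j + 1))))
            * ∏ i ∈ Finset.Icc 1 (n + 1),
                (if mcStr b w i = true then ENNReal.ofReal (F (n - i)) else 1) := by
    intro b w
    rw [hblock n b w, termT (n + 1) (by omega), mcStr_one,
      show n + 1 - 1 = n from rfl]
  -- key recursion identity
  have key : ∀ a : Bool,
      μ (A (n + 1 + 1) ∩ {ω | X 1 ω = a})
        = (if a = true then ENNReal.ofReal (F n) else 1)
          * ∑ b : Bool, ENNReal.ofReal (ptrans a b)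
              * (μ {ω | X 1 ω = a}
                * ((μ {ω | X 1 ω = b})⁻¹ * μ (A (n + 1) ∩ {ω | X 1 ω = b}))) := by
    intro a
    have h1 : ∀ (b : Bool) (w : Fin n → Bool),
        μ (A (n + 1 + 1) ∩ ({ω | X 1 ω = a}
            ∩ {ω | ∀ j : Fin (n + 1), X (2 + (j : ℕ)) ω = (Fin.cons b w : Fin (n + 1) → Bool) j}))
          = (if a = true then ENNReal.ofReal (F n) else 1)
            * (ENNReal.ofReal (ptrans a b)
              * (μ {ω | X 1 ω = a}
                * ((μ {ω | X 1 ω = b})⁻¹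
                  * μ (A (n + 1) ∩ ({ω | X 1 ω = b}
                      ∩ {ω | ∀ j : Fin n, X (2 + (j : ℕ)) ω = w j}))))) := by
      intro b w
      rw [h2 b w, hblock (n + 1) a (Fin.cons b w), termT (n + 1 + 1) (by omega), mcStr_one,
        show n + 1 + 1 - 1 = n + 1 from rfl]
      rw [prod_Icc_shift n (fun j => ENNReal.ofReal
        (ptrans (mcStr a (Fin.cons b w) j) (mcStr a (Fin.cons b w) (j + 1)))),
        prod_Icc_shift (n + 1) (fun i =>
          if mcStr a (Fin.cons b w) i = true then ENNReal.ofReal (F (n + 1 - i)) else 1)]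
      have hQ : ∏ j ∈ Finset.Icc 1 n, ENNReal.ofReal
            (ptrans (mcStr a (Fin.cons b w) (j + 1)) (mcStr a (Fin.cons b w) (j + 1 + 1)))
          = ∏ j ∈ Finset.Icc 1 n, ENNReal.ofReal (ptrans (mcStr b w j) (mcStr b w (j + 1))) := by
        refine Finset.prod_congr rfl fun j hj => ?_
        rw [Finset.mem_Icc] at hj
        rw [mcStr_shift a b w j hj.1 (by omega), mcStr_shift a b w (j + 1) (by omega) (by omega)]
      have hRR : ∏ i ∈ Finset.Icc 1 (n + 1),
            (if mcStr a (Fin.cons b w) (i + 1) = true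
              then ENNReal.ofReal (F (n + 1 - (i + 1))) else 1)
          = ∏ i ∈ Finset.Icc 1 (n + 1),
            (if mcStr b w i = true then ENNReal.ofReal (F (n - i)) else 1) := by
        refine Finset.prod_congr rfl fun i hi => ?_
        rw [Finset.mem_Icc] at hi
        rw [mcStr_shift a b w i hi.1 hi.2, show n + 1 - (i + 1) = n - i from by omega]
      rw [hQ, hRR, mcStr_shift a b w 1 le_rfl (by omega), mcStr_one, mcStr_one,
        show n + 1 - 1 = n from rfl]
      have hcan : (μ {ω | X 1 ω = b})⁻¹ * (μ {ω | X 1 ω = b}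
            * (∏ j ∈ Finset.Icc 1 n, ENNReal.ofReal (ptrans (mcStr b w j) (mcStr b w (j + 1))))
            * ∏ i ∈ Finset.Icc 1 (n + 1),
                (if mcStr b w i = true then ENNReal.ofReal (F (n - i)) else 1))
          = (∏ j ∈ Finset.Icc 1 n, ENNReal.ofReal (ptrans (mcStr b w j) (mcStr b w (j + 1))))
            * ∏ i ∈ Finset.Icc 1 (n + 1),
                (if mcStr b w i = true then ENNReal.ofReal (F (n - i)) else 1) := by
        rw [show (μ {ω | X 1 ω = b})⁻¹ * (μ {ω | X 1 ω = b}
              * (∏ j ∈ Finset.Icc 1 n, ENNReal.ofReal (ptrans (mcStr b w j) (mcStr b w (j + 1))))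
              * ∏ i ∈ Finset.Icc 1 (n + 1),
                  (if mcStr b w i = true then ENNReal.ofReal (F (n - i)) else 1))
            = ((μ {ω | X 1 ω = b})⁻¹ * μ {ω | X 1 ω = b})
              * ((∏ j ∈ Finset.Icc 1 n, ENNReal.ofReal (ptrans (mcStr b w j) (mcStr b w (j + 1))))
                * ∏ i ∈ Finset.Icc 1 (n + 1),
                    (if mcStr b w i = true then ENNReal.ofReal (F (n - i)) else 1)) from by ring,
          ENNReal.inv_mul_cancel (hposb b) (measure_ne_top μ _), one_mul]
      rw [hcan]
      ring
    rw [part (A (n + 1 + 1) ∩ {ω | X 1 ω = a}) ((hAmeas _).inter (hXmeas 1 (measurableSet_singleton a))) (n + 1)]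
    have hassoc : ∀ v : Fin (n + 1) → Bool,
        (A (n + 1 + 1) ∩ {ω | X 1 ω = a}) ∩ {ω | ∀ j : Fin (n + 1), X (2 + (j : ℕ)) ω = v j}
          = A (n + 1 + 1) ∩ ({ω | X 1 ω = a}
              ∩ {ω | ∀ j : Fin (n + 1), X (2 + (j : ℕ)) ω = v j}) :=
      fun v => Set.inter_assoc _ _ _
    simp only [hassoc]
    rw [hsum, Finset.mul_sum]
    refine Finset.sum_congr rfl fun b _ => ?_
    rw [hR b]
    simp only [Finset.mul_sum]
    exact Finset.sum_congr rfl fun w _ => h1 b w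
  -- deduce the two conditional identities
  have hs0m : MeasurableSet {ω | X 1 ω = false} := hXmeas 1 (measurableSet_singleton false)
  have hs1m : MeasurableSet {ω | X 1 ω = true} := hXmeas 1 (measurableSet_singleton true)
  have hgen : ∀ (u c y : ENNReal), u ≠ 0 → u ≠ ⊤ → u⁻¹ * (c * (u * y)) = c * y := by
    intro u c y h0 ht
    rw [show u⁻¹ * (c * (u * y)) = (u⁻¹ * u) * (c * y) from by ring,
      ENNReal.inv_mul_cancel h0 ht, one_mul]
  constructor
  · rw [cond_apply hs0m, cond_apply hs0m, cond_apply hs1m,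
      Set.inter_comm {ω | X 1 ω = false} (A (n + 1 + 1)), key false,
      if_neg (by simp), one_mul, Fintype.sum_bool, mul_add,
      hgen _ _ _ hpos0 (measure_ne_top μ _), hgen _ _ _ hpos0 (measure_ne_top μ _),
      hptrans.1, hptrans.2.1,
      Set.inter_comm (A (n + 1)) {ω | X 1 ω = false},
      Set.inter_comm (A (n + 1)) {ω | X 1 ω = true}]
    ring
  · rw [cond_apply hs1m, cond_apply hs0m, cond_apply hs1m,
      Set.inter_comm {ω | X 1 ω = true} (A (n + 1 + 1)), key true,
      if_pos rfl, show n + 1 - 1 = n from rfl, Fintype.sum_bool,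
      show (μ {ω | X 1 ω = true})⁻¹ * (ENNReal.ofReal (F n)
          * (ENNReal.ofReal (ptrans true true)
              * (μ {ω | X 1 ω = true}
                * ((μ {ω | X 1 ω = true})⁻¹ * μ (A (n + 1) ∩ {ω | X 1 ω = true})))
            + ENNReal.ofReal (ptrans true false)
              * (μ {ω | X 1 ω = true}
                * ((μ {ω | X 1 ω = false})⁻¹ * μ (A (n + 1) ∩ {ω | X 1 ω = false})))))
        = ENNReal.ofReal (F n)
          * ((μ {ω | X 1 ω = true})⁻¹ * (ENNReal.ofReal (ptrans true true)
              * (μ {ω | X 1 ω = true}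
                * ((μ {ω | X 1 ω = true})⁻¹ * μ (A (n + 1) ∩ {ω | X 1 ω = true}))))
            + (μ {ω | X 1 ω = true})⁻¹ * (ENNReal.ofReal (ptrans true false)
              * (μ {ω | X 1 ω = true}
                * ((μ {ω | X 1 ω = false})⁻¹ * μ (A (n + 1) ∩ {ω | X 1 ω = false})))))
        from by ring,
      hgen _ _ _ hpos1 (measure_ne_top μ _), hgen _ _ _ hpos1 (measure_ne_top μ _),
      hptrans.2.2.1, hptrans.2.2.2,
      Set.inter_comm (A (n + 1)) {ω | X 1 ω = false},
      Set.inter_comm (A (n + 1)) {ω | X 1 ω = true}]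
    ring
end

section
/- Fix j ≥ 1 and let A(i,j), i ≥ 1, be the events that (i,j) is uncovered in the i.i.d. discrete Boolean model on ℕ² (sites open independently with probability p, i.i.d. integer radii ρ with squares i + [0,ρ_i]²). Then for k ≥ i, P(A(k,j) ∩ A(i,j)) = P(A(k-i,j))·P(A(i,j)). -/
open MeasureTheory ProbabilityTheory

lemma aux_measSet (s : Set (Bool × ℕ)) : MeasurableSet s :=
  s.to_countable.measurableSet

/-- Renewal structure along horizontal lines in the i.i.d. discrete Boolean model on `ℕ²`:
with `A(i,j)` the event that `(i,j)` is uncovered, for `k ≥ i ≥ 1` one has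
`P(A(k,j) ∩ A(i,j)) = P(A(k-i,j))·P(A(i,j))`. -/
theorem stmt_18 {Ω : Type*} [MeasurableSpace Ω] (μ : Measure Ω) [IsProbabilityMeasure μ]
    (X : ℕ × ℕ → Ω → Bool) (ρ : ℕ × ℕ → Ω → ℕ)
    (hXmeas : ∀ v, Measurable (X v)) (hρmeas : ∀ v, Measurable (ρ v))
    (hindep : iIndepFun
      (fun v ω => (X v ω, ρ v ω)) μ)
    (p : ℝ) (hp : 0 < p) (hp1 : p < 1)
    (hX : ∀ v, μ {ω | X v ω = true} = ENNReal.ofReal p)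
    (hρpos : ∀ v ω, 1 ≤ ρ v ω)
    (hid : ∀ v w, IdentDistrib (fun ω => (X v ω, ρ v ω)) (fun ω => (X w ω, ρ w ω)) μ μ)
    (A : ℕ → ℕ → Set Ω)
    (hA : ∀ i j, A i j = {ω | ¬ ∃ k l : ℕ, 1 ≤ k ∧ 1 ≤ l ∧ X (k, l) ω = true ∧
        k ≤ i ∧ i ≤ k + ρ (k, l) ω ∧ l ≤ j ∧ j ≤ l + ρ (k, l) ω})
    (j : ℕ) (hj : 1 ≤ j) :
    ∀ i k : ℕ, 1 ≤ i → i ≤ k →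
      μ (A k j ∩ A i j) = μ (A (k - i) j) * μ (A i j) := by
  intro i k hi hik
  -- the "pair" random variables
  set pair : ℕ × ℕ → Ω → Bool × ℕ := fun v ω => (X v ω, ρ v ω) with hpair
  -- covering condition sets
  set c : ℕ → ℕ × ℕ → Set (Bool × ℕ) :=
    fun m v => {x | x.1 = true ∧ m ≤ v.1 + x.2 ∧ j ≤ v.2 + x.2} with hc
  -- rewrite each `A m j` as a finite intersection
  have hAeq : ∀ m : ℕ, A m j = ⋂ v ∈ (Finset.Icc 1 m ×ˢ Finset.Icc 1 j),
      pair v ⁻¹' (c m v)ᶜ := by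
    intro m
    rw [hA]
    ext ω
    simp only [Set.mem_setOf_eq, Set.mem_iInter, Finset.mem_product, Finset.mem_Icc,
      Set.mem_preimage, Set.mem_compl_iff, hc, hpair]
    constructor
    · rintro h ⟨a, l⟩ ⟨⟨ha1, ha2⟩, ⟨hl1, hl2⟩⟩ ⟨hx, hm, hj'⟩
      exact h ⟨a, l, ha1, hl1, hx, ha2, hm, hl2, hj'⟩
    · rintro h ⟨a, l, ha1, hl1, hx, ha2, hm, hl2, hj'⟩
      exact h (a, l) ⟨⟨ha1, ha2⟩, ⟨hl1, hl2⟩⟩ ⟨hx, hm, hj'⟩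
  -- index finsets
  set S : Finset (ℕ × ℕ) := Finset.Icc 1 i ×ˢ Finset.Icc 1 j with hS
  set T : Finset (ℕ × ℕ) := Finset.Icc (i + 1) k ×ˢ Finset.Icc 1 j with hT
  set S' : Finset (ℕ × ℕ) := Finset.Icc 1 (k - i) ×ˢ Finset.Icc 1 j with hS'
  have hdisj : Disjoint T S := by
    rw [Finset.disjoint_left]
    rintro ⟨a, l⟩ hvT hvS
    simp only [hT, hS, Finset.mem_product, Finset.mem_Icc] at hvT hvS
    omega
  -- the intermediate event
  set B : Set Ω := ⋂ v ∈ T, pair v ⁻¹' (c k v)ᶜ with hB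
  -- combined condition
  set e : ℕ × ℕ → Set (Bool × ℕ) := fun v => if v.1 ≤ i then c i v else c k v with he
  -- measurability in the comap σ-algebras
  have hms : ∀ (g : ℕ × ℕ → Set (Bool × ℕ)) (v : ℕ × ℕ),
      MeasurableSet[(inferInstance : MeasurableSpace (Bool × ℕ)).comap (pair v)]
        (pair v ⁻¹' (g v)ᶜ) := by
    intro g v
    exact ⟨(g v)ᶜ, aux_measSet _, rfl⟩
  -- Step 1: A k j ∩ A i j = B ∩ A i j
  have hstep1 : A k j ∩ A i j = B ∩ A i j := by
    ext ω
    simp only [Set.mem_inter_iff, hAeq, hB, Set.mem_iInter, Set.mem_preimage,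
      Set.mem_compl_iff, hT, hS, Finset.mem_product, Finset.mem_Icc, hc, hpair,
      Set.mem_setOf_eq]
    constructor
    · rintro ⟨h1, h2⟩
      refine ⟨fun v hv => h1 v ⟨⟨by omega, hv.1.2⟩, hv.2⟩, h2⟩
    · rintro ⟨h1, h2⟩
      refine ⟨?_, h2⟩
      rintro ⟨a, l⟩ ⟨⟨ha1, ha2⟩, ⟨hl1, hl2⟩⟩ ⟨hx, hm, hj'⟩
      by_cases hcase : a ≤ i
      · exact h2 (a, l) ⟨⟨ha1, hcase⟩, ⟨hl1, hl2⟩⟩ ⟨hx, by omega, hj'⟩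
      · exact h1 (a, l) ⟨⟨by omega, ha2⟩, ⟨hl1, hl2⟩⟩ ⟨hx, hm, hj'⟩
  -- Step 2: B ∩ A i j as one big intersection over T ∪ S
  have hstep2 : B ∩ A i j = ⋂ v ∈ T ∪ S, pair v ⁻¹' (e v)ᶜ := by
    rw [hB, hAeq i]
    ext ω
    simp only [Set.mem_inter_iff, Set.mem_iInter, Finset.mem_union]
    constructor
    · rintro ⟨h1, h2⟩ v hv
      rcases hv with hv | hv
      · have hvi : ¬ v.1 ≤ i := by
          simp only [hT, Finset.mem_product, Finset.mem_Icc] at hv; omega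
        simpa only [he, if_neg hvi] using h1 v hv
      · have hvi : v.1 ≤ i := by
          simp only [hS, Finset.mem_product, Finset.mem_Icc] at hv; exact hv.1.2
        simpa only [he, if_pos hvi] using h2 v hv
    · intro h
      constructor
      · intro v hv
        have hvi : ¬ v.1 ≤ i := by
          simp only [hT, Finset.mem_product, Finset.mem_Icc] at hv; omega
        have := h v (Or.inl hv)
        simpa only [he, if_neg hvi] using this
      · intro v hv
        have hvi : v.1 ≤ i := by
          simp only [hS, Finset.mem_product, Finset.mem_Icc] at hv; exact hv.1.2
        have := h v (Or.inr hv)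
        simpa only [he, if_pos hvi] using this
  -- Step 3: factorization by independence
  have hfac : μ (⋂ v ∈ T ∪ S, pair v ⁻¹' (e v)ᶜ)
      = (∏ v ∈ T, μ (pair v ⁻¹' (c k v)ᶜ)) * (∏ v ∈ S, μ (pair v ⁻¹' (c i v)ᶜ)) := by
    rw [hindep.meas_biInter (fun v _ => hms e v), Finset.prod_union hdisj]
    congr 1
    · refine Finset.prod_congr rfl fun v hv => ?_
      have hvi : ¬ v.1 ≤ i := by
        simp only [hT, Finset.mem_product, Finset.mem_Icc] at hv; omega
      rw [he]; simp only [if_neg hvi]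
    · refine Finset.prod_congr rfl fun v hv => ?_
      have hvi : v.1 ≤ i := by
        simp only [hS, Finset.mem_product, Finset.mem_Icc] at hv; exact hv.1.2
      rw [he]; simp only [if_pos hvi]
  have hBmeas : μ B = ∏ v ∈ T, μ (pair v ⁻¹' (c k v)ᶜ) :=
    hindep.meas_biInter (fun v _ => hms (c k) v)
  have hAimeas : μ (A i j) = ∏ v ∈ S, μ (pair v ⁻¹' (c i v)ᶜ) := by
    rw [hAeq i]; exact hindep.meas_biInter (fun v _ => hms (c i) v)
  have hAkimeas : μ (A (k - i) j) = ∏ v ∈ S', μ (pair v ⁻¹' (c (k - i) v)ᶜ) := by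
    rw [hAeq (k - i)]; exact hindep.meas_biInter (fun v _ => hms (c (k - i)) v)
  -- Step 4: μ B = μ (A (k-i) j) via the shift bijection
  have hshift : μ (A (k - i) j) = μ B := by
    rw [hAkimeas, hBmeas]
    refine Finset.prod_bij' (fun v _ => (v.1 + i, v.2)) (fun v _ => (v.1 - i, v.2))
      ?_ ?_ ?_ ?_ ?_
    · rintro ⟨a, l⟩ hv
      simp only [hS', Finset.mem_product, Finset.mem_Icc] at hv
      simp only [hT, Finset.mem_product, Finset.mem_Icc]
      omega
    · rintro ⟨a, l⟩ hv
      simp only [hT, Finset.mem_product, Finset.mem_Icc] at hv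
      simp only [hS', Finset.mem_product, Finset.mem_Icc]
      omega
    · rintro ⟨a, l⟩ hv
      simp only [hS', Finset.mem_product, Finset.mem_Icc] at hv
      simp only [Prod.mk.injEq]
      exact ⟨by omega, trivial⟩
    · rintro ⟨a, l⟩ hv
      simp only [hT, Finset.mem_product, Finset.mem_Icc] at hv
      simp only [Prod.mk.injEq]
      exact ⟨by omega, trivial⟩
    · rintro ⟨a, l⟩ hv
      simp only [hS', Finset.mem_product, Finset.mem_Icc] at hv
      have hsets : (c (k - i) (a, l))ᶜ = (c k (a + i, l))ᶜ := by
        ext x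
        simp only [Set.mem_compl_iff, hc, Set.mem_setOf_eq]
        constructor
        · rintro h ⟨hx1, hx2, hx3⟩; exact h ⟨hx1, by omega, hx3⟩
        · rintro h ⟨hx1, hx2, hx3⟩; exact h ⟨hx1, by omega, hx3⟩
      rw [hsets]
      exact (hid (a, l) (a + i, l)).measure_mem_eq (aux_measSet _)
  calc μ (A k j ∩ A i j) = μ (⋂ v ∈ T ∪ S, pair v ⁻¹' (e v)ᶜ) := by
        rw [hstep1, hstep2]
    _ = (∏ v ∈ T, μ (pair v ⁻¹' (c k v)ᶜ)) * (∏ v ∈ S, μ (pair v ⁻¹' (c i v)ᶜ)) := hfac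
    _ = μ (A (k - i) j) * μ (A i j) := by rw [hshift, hBmeas, hAimeas]
end
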